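/- For every real number t ≥ 0 and every integer k ≥ 1, the equation e^{y·cot y}·(sin y)/y = e^{2t+1} has exactly one solution y in the open interval (2kπ, (2k+1)π). -/

import Mathlib

open Real Set

/-- Logarithm of the function `y ↦ e^{y cot y} (sin y)/y`. -/
private noncomputable def bceG (y : ℝ) : ℝ :=
  y * (Real.cos y / Real.sin y) + Real.log (Real.sin y) - Real.log y

private lemma bceG_hasDeriv {x : ℝ} (hs : 0 < Real.sin x) (hx : 6 < x) :
    ∃ d, d < 0 ∧ HasDerivAt bceG d x := by
  have hx0 : (0:ℝ) < x := by linarith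
  have h1 : HasDerivAt (fun y => Real.cos y / Real.sin y)
      ((-Real.sin x * Real.sin x - Real.cos x * Real.cos x) / Real.sin x ^ 2) x :=
    (Real.hasDerivAt_cos x).div (Real.hasDerivAt_sin x) hs.ne'
  have h2 : HasDerivAt (fun y => y * (Real.cos y / Real.sin y))
      (1 * (Real.cos x / Real.sin x) +
        x * ((-Real.sin x * Real.sin x - Real.cos x * Real.cos x) / Real.sin x ^ 2)) x :=
    (hasDerivAt_id x).mul h1
  have h3 : HasDerivAt (fun y => Real.log (Real.sin y)) (Real.cos x / Real.sin x) x :=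
    (Real.hasDerivAt_sin x).log hs.ne'
  have h4 : HasDerivAt Real.log x⁻¹ x := Real.hasDerivAt_log hx0.ne'
  refine ⟨_, ?_, (h2.add h3).sub h4⟩
  -- show the derivative is negative
  have hpyth : Real.sin x ^ 2 + Real.cos x ^ 2 = 1 := Real.sin_sq_add_cos_sq x
  have hcc : -Real.sin x * Real.sin x - Real.cos x * Real.cos x = -1 := by
    linear_combination -hpyth
  rw [hcc]
  have hnum : 2 * Real.cos x * Real.sin x * x - x ^ 2 - Real.sin x ^ 2 < 0 := by
    nlinarith [sq_nonneg (Real.cos x - Real.sin x), sq_nonneg (Real.sin x),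
      mul_nonneg (sq_nonneg (Real.cos x - Real.sin x)) hx0.le]
  have heq : 1 * (Real.cos x / Real.sin x) + x * (-1 / Real.sin x ^ 2)
        + Real.cos x / Real.sin x - x⁻¹
      = (2 * Real.cos x * Real.sin x * x - x ^ 2 - Real.sin x ^ 2) / (x * Real.sin x ^ 2) := by
    field_simp
    ring
  rw [heq]
  exact div_neg_of_neg_of_pos hnum (by positivity)

set_option maxHeartbeats 1000000 in
/-- For every `t ≥ 0` and every integer `k ≥ 1`, the equation
`e^{y cot y} (sin y)/y = e^{2t+1}` has exactly one solution `y ∈ (2kπ, (2k+1)π)`. -/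
theorem branch_cut_endpoint_equation (t : ℝ) (ht : 0 ≤ t) (k : ℕ) (hk : 1 ≤ k) :
    ∃! y : ℝ, y ∈ Set.Ioo (2 * (k : ℝ) * Real.pi) ((2 * (k : ℝ) + 1) * Real.pi) ∧
      Real.exp (y * (Real.cos y / Real.sin y)) * (Real.sin y / y)
        = Real.exp (2 * t + 1) := by
  have hπ : (0:ℝ) < π := Real.pi_pos
  have hπ3 : (3:ℝ) ≤ π := by linarith [Real.pi_gt_three]
  have hπlt : π < 4 := Real.pi_lt_d2.trans (by norm_num)
  set A : ℝ := 2 * (k : ℝ) * π with hA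
  set B : ℝ := (2 * (k : ℝ) + 1) * π with hB
  clear_value A B
  have hk1 : (1:ℝ) ≤ (k:ℝ) := by exact_mod_cast hk
  have hA6 : (6:ℝ) ≤ A := by rw [hA]; nlinarith
  have hBA : B = A + π := by rw [hA, hB]; ring
  -- basic facts on the interval
  have hmem : ∀ x ∈ Ioo A B, 0 < Real.sin x ∧ 6 < x := by
    intro x hx
    obtain ⟨hx1, hx2⟩ := hx
    have hsin : Real.sin (x - A) = Real.sin x := by
      have h := Real.sin_add_nat_mul_two_pi (x - A) k
      rw [show x - A + (k:ℕ) * (2 * π) = x by push_cast; rw [hA]; ring] at h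
      exact h.symm
    constructor
    · rw [← hsin]
      exact Real.sin_pos_of_pos_of_lt_pi (by linarith) (by rw [hBA] at hx2; linarith)
    · linarith
  -- f = exp ∘ g on the interval
  have hfg : ∀ x ∈ Ioo A B,
      Real.exp (x * (Real.cos x / Real.sin x)) * (Real.sin x / x) = Real.exp (bceG x) := by
    intro x hx
    obtain ⟨hs, hx6⟩ := hmem x hx
    rw [bceG, Real.exp_sub, Real.exp_add, Real.exp_log hs, Real.exp_log (by linarith),
      mul_div_assoc]
  have hcont : ContinuousOn bceG (Ioo A B) := by
    intro x hx
    obtain ⟨hs, hx6⟩ := hmem x hx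
    obtain ⟨d, _, hd⟩ := bceG_hasDeriv hs hx6
    exact hd.continuousAt.continuousWithinAt
  have hanti : StrictAntiOn bceG (Ioo A B) := by
    apply strictAntiOn_of_deriv_neg (convex_Ioo A B) hcont
    intro x hx
    rw [interior_Ioo] at hx
    obtain ⟨hs, hx6⟩ := hmem x hx
    obtain ⟨d, hdneg, hd⟩ := bceG_hasDeriv hs hx6
    rw [hd.deriv]
    exact hdneg
  -- set up existence
  set u : ℝ := 2 * t + 1 with hu
  have hu1 : (1:ℝ) ≤ u := by rw [hu]; linarith
  clear_value u
  set ε : ℝ := Real.exp (-u) / 3 with hε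
  clear_value ε
  have hε0 : 0 < ε := by rw [hε]; positivity
  have hε1 : ε ≤ 1/3 := by
    rw [hε]
    have : Real.exp (-u) ≤ 1 := Real.exp_le_one_iff.mpr (by linarith)
    linarith
  set a : ℝ := A + ε with ha
  set b : ℝ := A + π / 2 with hb
  clear_value a b
  have hab : a ≤ b := by rw [ha, hb]; linarith
  have hsub : Icc a b ⊆ Ioo A B := by
    intro x hx
    obtain ⟨h1, h2⟩ := hx
    constructor
    · rw [ha] at h1; linarith
    · rw [hb] at h2; rw [hBA]; linarith
  -- trig values at a and b
  have hsina : Real.sin a = Real.sin ε := by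
    have h := Real.sin_add_nat_mul_two_pi ε k
    rwa [show ε + (k:ℕ) * (2 * π) = a by push_cast; rw [ha, hA]; ring] at h
  have hcosa : Real.cos a = Real.cos ε := by
    have h := Real.cos_add_nat_mul_two_pi ε k
    rwa [show ε + (k:ℕ) * (2 * π) = a by push_cast; rw [ha, hA]; ring] at h
  have hsinb : Real.sin b = 1 := by
    have h := Real.sin_add_nat_mul_two_pi (π/2) k
    rw [show π/2 + (k:ℕ) * (2 * π) = b by push_cast; rw [hb, hA]; ring] at h
    rw [h, Real.sin_pi_div_two]
  have hcosb : Real.cos b = 0 := by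
    have h := Real.cos_add_nat_mul_two_pi (π/2) k
    rw [show π/2 + (k:ℕ) * (2 * π) = b by push_cast; rw [hb, hA]; ring] at h
    rw [h, Real.cos_pi_div_two]
  -- bounds on sin ε, cos ε
  have hsε2 : Real.sin ε ≤ ε := Real.sin_le hε0.le
  have hsε1 : ε / 2 ≤ Real.sin ε := by
    have h := Real.sin_gt_sub_cube hε0
    have hsq : ε ^ 2 ≤ 1/9 := by nlinarith
    nlinarith
  have hsε0 : 0 < Real.sin ε := lt_of_lt_of_le (by linarith) hsε1
  have hcε : 1/2 ≤ Real.cos ε := by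
    have h := Real.one_sub_sq_div_two_le_cos (x := ε)
    nlinarith
  have ha6 : (6:ℝ) ≤ a := by rw [ha]; linarith
  -- g b ≤ u
  have hgb : bceG b ≤ u := by
    have hb1 : (1:ℝ) ≤ b := by rw [hb]; linarith
    have hlogb : 0 ≤ Real.log b := Real.log_nonneg hb1
    rw [bceG, hsinb, hcosb, Real.log_one]
    norm_num
    linarith
  -- u ≤ g a
  have hga : u ≤ bceG a := by
    rw [bceG, hsina, hcosa]
    have h1 : a * ((1/2) / ε) ≤ a * (Real.cos ε / Real.sin ε) := by
      apply mul_le_mul_of_nonneg_left _ (by linarith)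
      exact div_le_div₀ (by linarith) hcε hsε0 hsε2
    have h2 : Real.log (ε/2) ≤ Real.log (Real.sin ε) :=
      Real.log_le_log (by linarith) hsε1
    have h3 : Real.log a ≤ a - 1 := Real.log_le_sub_one_of_pos (by linarith)
    have h4 : Real.log (ε/2) = -u - Real.log 3 - Real.log 2 := by
      rw [hε, Real.log_div (by positivity) (by norm_num),
          Real.log_div (Real.exp_ne_zero _) (by norm_num), Real.log_exp]
    have hinv : ε⁻¹ = 3 * Real.exp u := by
      rw [hε, inv_div, Real.exp_neg, div_eq_mul_inv, inv_inv]
    have h5 : a * ((1/2) / ε) = 3/2 * (a * Real.exp u) := by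
      rw [div_eq_mul_inv, hinv]; ring
    have h6 : u + 1 ≤ Real.exp u := Real.add_one_le_exp u
    have h7 : Real.log 3 ≤ 2 := by linarith [Real.log_le_sub_one_of_pos (by norm_num : (0:ℝ) < 3)]
    have h8 : Real.log 2 ≤ 1 := by linarith [Real.log_le_sub_one_of_pos (by norm_num : (0:ℝ) < 2)]
    have h9 : a * (u + 1) ≤ a * Real.exp u :=
      mul_le_mul_of_nonneg_left h6 (by linarith)
    have h10 : 6 * u ≤ a * u := mul_le_mul_of_nonneg_right ha6 (by linarith)
    linarith
  -- IVT
  obtain ⟨y, hy, hgy⟩ := intermediate_value_Icc' hab (hcont.mono hsub) ⟨hgb, hga⟩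
  have hyI : y ∈ Ioo A B := hsub hy
  refine ⟨y, ⟨hyI, ?_⟩, ?_⟩
  · rw [hfg y hyI, hgy]
  · rintro z ⟨hzI, hz⟩
    have hgz : bceG z = u := by
      have h := hfg z hzI
      rw [hz] at h
      exact Real.exp_injective h.symm
    exact hanti.injOn hzI hyI (by rw [hgz, hgy])
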